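/- The bivariate generating function over parking functions satisfies: sum over π ∈ PF(m,n) of x^{slev(π)} y^{lel(π)} = (n-m+1)xy[(m-1)((n-m+1)x + y + m - 1)^{m-2} + (xy + (n-m)x + 1)(xy + (n-m)x + m)^{m-2}]. -/

import Mathlib

open Finset

lemma sum_choose_mul (N : ℕ) (a b : ℚ) :
    ∑ k ∈ range (N+1), (N.choose k : ℚ) * k * a^k * b^(N-k) = N * a * (a+b)^(N-1) := by
  cases N with
  | zero => simp
  | succ M =>
    rw [Finset.sum_range_succ']
    simp only [Nat.cast_zero, mul_zero, zero_mul, pow_zero, add_zero, Nat.add_sub_add_right,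
      Nat.add_sub_cancel, Nat.cast_add, Nat.cast_one]
    have h : ∀ k ∈ range (M+1), ((M+1).choose (k+1) : ℚ) * ((k:ℚ)+1) * a^(k+1) * b^(M-k)
        = ((M:ℚ)+1) * a * ((M.choose k : ℚ) * a^k * b^(M-k)) := by
      intro k _
      have hc : ((M+1).choose (k+1) : ℚ) * ((k:ℚ)+1) = ((M:ℚ)+1) * (M.choose k : ℚ) := by
        have h2 : ((M + 1) * M.choose k : ℕ) = ((M+1).choose (k+1) * (k+1) : ℕ) :=
          Nat.add_one_mul_choose_eq M k
        exact_mod_cast (congrArg (Nat.cast (R := ℚ)) h2).symm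
      rw [pow_succ]
      calc ((M+1).choose (k+1) : ℚ) * ((k:ℚ)+1) * (a^k * a) * b^(M-k)
          = (((M+1).choose (k+1) : ℚ) * ((k:ℚ)+1)) * (a^k * a * b^(M-k)) := by ring
        _ = (((M:ℚ)+1) * (M.choose k : ℚ)) * (a^k * a * b^(M-k)) := by rw [hc]
        _ = ((M:ℚ)+1) * a * ((M.choose k : ℚ) * a^k * b^(M-k)) := by ring
    rw [Finset.sum_congr rfl h, ← Finset.mul_sum, add_pow a b M]
    rw [Finset.mul_sum, Finset.mul_sum]
    exact Finset.sum_congr rfl (fun k _ => by ring)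

lemma sum_choose_plain (N : ℕ) (a b : ℚ) :
    ∑ k ∈ range (N+1), (N.choose k : ℚ) * a^k * b^(N-k) = (a+b)^N := by
  rw [add_pow a b N]
  exact Finset.sum_congr rfl (fun k _ => by ring)

lemma key1 (N : ℕ) (hN : 1 ≤ N) (a : ℚ) :
    ∑ k ∈ range N, (N.choose k : ℚ) * ((k:ℚ)+1) * a^k * ((N:ℚ)+1)^(N-1-k) + a^N
      = (a+1) * (a+((N:ℚ)+1))^(N-1) := by
  set B : ℚ := (N:ℚ)+1 with hB
  have hB0 : B ≠ 0 := by positivity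
  apply mul_left_cancel₀ hB0
  have step : B * (∑ k ∈ range N, (N.choose k : ℚ) * ((k:ℚ)+1) * a^k * B^(N-1-k) + a^N)
      = ∑ k ∈ range (N+1), (N.choose k : ℚ) * ((k:ℚ)+1) * a^k * B^(N-k) := by
    rw [Finset.sum_range_succ, mul_add, Finset.mul_sum]
    congr 1
    · refine Finset.sum_congr rfl (fun k hk => ?_)
      have hk' : k < N := Finset.mem_range.mp hk
      have : N - k = (N - 1 - k) + 1 := by omega
      rw [this, pow_succ]
      ring
    · simp [Nat.choose_self]; exact Or.inl hB
  rw [step]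
  have split : ∑ k ∈ range (N+1), (N.choose k : ℚ) * ((k:ℚ)+1) * a^k * B^(N-k)
      = (∑ k ∈ range (N+1), (N.choose k : ℚ) * (k:ℚ) * a^k * B^(N-k))
        + ∑ k ∈ range (N+1), (N.choose k : ℚ) * a^k * B^(N-k) := by
    rw [← Finset.sum_add_distrib]
    exact Finset.sum_congr rfl (fun k _ => by ring)
  rw [split, sum_choose_mul, sum_choose_plain]
  have hpow : (a+B)^N = (a+B)^(N-1) * (a+B) := by
    conv_lhs => rw [show N = (N-1)+1 by omega]
    rw [pow_succ]
  rw [hpow, hB]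
  ring


lemma pow_card_filter {α : Type} [Fintype α] (p : α → Prop) [DecidablePred p] (y : ℚ) :
    y ^ (univ.filter p).card = ∏ j : α, (if p j then y else 1) := by
  rw [Finset.prod_ite, Finset.prod_const, Finset.prod_const, one_pow, mul_one]

lemma sum_y {α : Type} [Fintype α] [DecidableEq α] (j0 : α) (K : ℕ) (y : ℚ) :
    ∑ v : α → Fin K, y ^ (univ.filter (fun j => v j = v j0)).card
      = (K:ℚ) * y * (y + (K:ℚ) - 1) ^ (Fintype.card α - 1) := by
  classical
  have step1 : ∀ v : α → Fin K,
      y ^ (univ.filter (fun j => v j = v j0)).card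
        = ∑ c : Fin K, ∏ j : α,
            (if j = j0 then (if v j = c then y else 0) else (if v j = c then y else 1)) := by
    intro v
    rw [pow_card_filter]
    rw [Finset.sum_eq_single (v j0)]
    · refine Finset.prod_congr rfl (fun j _ => ?_)
      by_cases hj : j = j0
      · subst hj; simp
      · simp [hj]
    · intro c _ hc
      refine Finset.prod_eq_zero (Finset.mem_univ j0) ?_
      simp [Ne.symm, hc]
    · intro h; exact absurd (Finset.mem_univ _) h
  calc ∑ v : α → Fin K, y ^ (univ.filter (fun j => v j = v j0)).card
      = ∑ v : α → Fin K, ∑ c : Fin K, ∏ j : α,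
          (if j = j0 then (if v j = c then y else 0) else (if v j = c then y else 1)) :=
        Finset.sum_congr rfl (fun v _ => step1 v)
    _ = ∑ c : Fin K, ∑ v : α → Fin K, ∏ j : α,
          (if j = j0 then (if v j = c then y else 0) else (if v j = c then y else 1)) :=
        Finset.sum_comm
    _ = ∑ c : Fin K, ∏ j : α, ∑ a : Fin K,
          (if j = j0 then (if a = c then y else 0) else (if a = c then y else 1)) := by
        refine Finset.sum_congr rfl (fun c _ => ?_)
        rw [← Finset.sum_prod_piFinset, Fintype.piFinset_univ]
    _ = ∑ c : Fin K, (y * (y + (K:ℚ) - 1) ^ (Fintype.card α - 1)) := by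
        refine Finset.sum_congr rfl (fun c _ => ?_)
        have hfac : ∀ j : α, (∑ a : Fin K,
            (if j = j0 then (if a = c then y else 0) else (if a = c then y else 1)))
            = if j = j0 then y else (y + (K:ℚ) - 1) := by
          intro j
          by_cases hj : j = j0
          · simp [hj]
          · simp only [hj, if_false]
            have : ∀ a : Fin K, (if a = c then y else 1) = (if a = c then y - 1 else 0) + 1 := by
              intro a; by_cases h : a = c <;> simp [h]
            rw [Finset.sum_congr rfl (fun a _ => this a), Finset.sum_add_distrib,
              Finset.sum_ite_eq' univ c (fun _ => y - 1)]
            simp [Finset.card_univ]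
            ring
        rw [Finset.prod_congr rfl (fun j _ => hfac j)]
        rw [← Finset.mul_prod_erase univ _ (Finset.mem_univ j0), if_pos rfl]
        have : ∀ j ∈ univ.erase j0, (if j = j0 then y else (y + (K:ℚ) - 1)) = y + (K:ℚ) - 1 := by
          intro j hj; simp [(Finset.mem_erase.mp hj).1]
        rw [Finset.prod_congr rfl this, Finset.prod_const, Finset.card_erase_of_mem (mem_univ j0),
          Finset.card_univ]
    _ = (K:ℚ) * y * (y + (K:ℚ) - 1) ^ (Fintype.card α - 1) := by
        rw [Finset.sum_const, Finset.card_univ, Fintype.card_fin, nsmul_eq_mul]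
        ring


def pf' (ι : Type) [Fintype ι] [DecidableEq ι] (n : ℕ) : Finset (ι → Fin n) :=
  univ.filter (fun π =>
    ∀ i, i ≤ n → Fintype.card ι + i ≤ (univ.filter (fun k => (π k : ℕ) + 1 ≤ i)).card + n)

lemma mem_pf' {ι : Type} [Fintype ι] [DecidableEq ι] {n : ℕ} {π : ι → Fin n} :
    π ∈ pf' ι n ↔
      ∀ i, i ≤ n → Fintype.card ι + i ≤ (univ.filter (fun k => (π k : ℕ) + 1 ≤ i)).card + n := by
  simp [pf']

lemma card_filter_subtype {ι : Type} [DecidableEq ι] (T : Finset ι)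
    (p : ι → Prop) [DecidablePred p] :
    ((univ : Finset {x // x ∈ T}).filter (fun k => p k.1)).card = (T.filter p).card := by
  rw [Finset.univ_eq_attach]
  have := Finset.filter_attach p T
  rw [this, Finset.card_map, Finset.card_attach]

lemma card_filter_split {ι : Type} [Fintype ι] [DecidableEq ι] (S : Finset ι)
    (p : ι → Prop) [DecidablePred p] :
    (univ.filter p).card
      = ((univ : Finset {x // x ∈ S}).filter (fun k => p k.1)).card
        + ((univ : Finset {x // x ∈ Sᶜ}).filter (fun k => p k.1)).card := by
  rw [card_filter_subtype, card_filter_subtype]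
  rw [← Finset.card_union_of_disjoint, ← Finset.filter_union]
  · congr 1
    rw [Finset.union_compl]
  · exact Finset.disjoint_filter_filter (disjoint_compl_right)

section GlueDef
variable {ι : Type} [Fintype ι] [DecidableEq ι] {n K M : ℕ}

def glue (hKM : K + M = n) (S : Finset ι)
    (v : {x // x ∈ S} → Fin K) (q : {x // x ∈ Sᶜ} → Fin M) : ι → Fin n :=
  fun i => if h : i ∈ S
    then ⟨(v ⟨i, h⟩ : ℕ), lt_of_lt_of_le (v ⟨i, h⟩).isLt (Nat.le.intro hKM)⟩
    else ⟨K + (q ⟨i, Finset.mem_compl.mpr h⟩ : ℕ),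
      hKM ▸ Nat.add_lt_add_left (q ⟨i, Finset.mem_compl.mpr h⟩).isLt K⟩

variable (hKM : K + M = n) (S : Finset ι) (v : {x // x ∈ S} → Fin K) (q : {x // x ∈ Sᶜ} → Fin M)

lemma glue_low {i : ι} (h : i ∈ S) : (glue hKM S v q i : ℕ) = (v ⟨i, h⟩ : ℕ) := by
  simp [glue, h]

lemma glue_high {i : ι} (h : i ∈ Sᶜ) :
    (glue hKM S v q i : ℕ) = K + (q ⟨i, h⟩ : ℕ) := by
  have h' : ¬ (i ∈ S) := Finset.mem_compl.mp h
  simp [glue, h']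

lemma lowset_glue :
    univ.filter (fun i => (glue hKM S v q i : ℕ) + 1 ≤ K) = S := by
  ext i
  simp only [Finset.mem_filter, Finset.mem_univ, true_and]
  by_cases h : i ∈ S
  · rw [glue_low hKM S v q h]
    have := (v ⟨i, h⟩).isLt
    constructor <;> intro <;> [exact h; omega]
  · rw [glue_high hKM S v q (Finset.mem_compl.mpr h)]
    constructor <;> intro h2 <;> [omega; exact absurd h2 h]

lemma count_glue (j : ℕ) :
    (univ.filter (fun k => (glue hKM S v q k : ℕ) + 1 ≤ K + j)).card
      = S.card + ((univ : Finset {x // x ∈ Sᶜ}).filter (fun k => (q k : ℕ) + 1 ≤ j)).card := by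
  rw [card_filter_split S]
  congr 1
  · have : ∀ k : {x // x ∈ S}, (glue hKM S v q k.1 : ℕ) + 1 ≤ K + j := by
      intro k
      rw [glue_low hKM S v q k.2]
      have := (v ⟨k.1, k.2⟩).isLt
      omega
    rw [Finset.filter_true_of_mem (fun k _ => this k), Finset.card_univ, Fintype.card_coe]
  · congr 1
    apply Finset.filter_congr
    intro k _
    rw [glue_high hKM S v q k.2]
    have hq : q ⟨k.1, k.2⟩ = q k := by congr
    rw [hq]
    omega

lemma glue_mem_pf'_iff (hcard : Fintype.card ι = M + 1) (hsub : Fintype.card {x // x ∈ Sᶜ} = Fintype.card ι - S.card) :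
    glue hKM S v q ∈ pf' ι n ↔ q ∈ pf' {x // x ∈ Sᶜ} M := by
  have hs : S.card ≤ Fintype.card ι := by
    simpa using Finset.card_le_card (Finset.subset_univ S)
  rw [mem_pf', mem_pf']
  constructor
  · intro H j hj
    have := H (K + j) (by omega)
    rw [count_glue] at this
    rw [hsub]
    omega
  · intro H i hi
    by_cases hik : K ≤ i
    · obtain ⟨j, rfl⟩ : ∃ j, i = K + j := ⟨i - K, by omega⟩
      have := H j (by omega)
      rw [count_glue]
      rw [hsub] at this
      omega
    · omega

lemma lel_glue_low {i0 : ι} (h0 : i0 ∈ S) :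
    (univ.filter (fun i => glue hKM S v q i = glue hKM S v q i0)).card
      = ((univ : Finset {x // x ∈ S}).filter (fun j => v j = v ⟨i0, h0⟩)).card := by
  rw [card_filter_split S]
  have hval : (glue hKM S v q i0 : ℕ) = (v ⟨i0, h0⟩ : ℕ) := glue_low hKM S v q h0
  have e2 : ((univ : Finset {x // x ∈ Sᶜ}).filter
      (fun k => glue hKM S v q k.1 = glue hKM S v q i0)).card = 0 := by
    rw [Finset.card_eq_zero, Finset.filter_eq_empty_iff]
    intro k _
    intro heq
    have h1 := glue_high hKM S v q k.2
    have h2 : (glue hKM S v q k.1 : ℕ) = (glue hKM S v q i0 : ℕ) := by rw [heq]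
    have := (v ⟨i0, h0⟩).isLt
    omega
  rw [e2, add_zero]
  congr 1
  apply Finset.filter_congr
  intro k _
  have h1 := glue_low hKM S v q k.2
  have hq : v ⟨k.1, k.2⟩ = v k := by congr
  constructor
  · intro hh
    have : (glue hKM S v q k.1 : ℕ) = (glue hKM S v q i0 : ℕ) := by rw [hh]
    apply Fin.ext
    rw [← hq, ← h1, this, hval]
  · intro hh
    apply Fin.ext
    rw [h1, hq, hh, hval]

lemma lel_glue_high {i0 : ι} (h0 : i0 ∈ Sᶜ) :
    (univ.filter (fun i => glue hKM S v q i = glue hKM S v q i0)).card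
      = ((univ : Finset {x // x ∈ Sᶜ}).filter (fun j => q j = q ⟨i0, h0⟩)).card := by
  rw [card_filter_split S]
  have hval : (glue hKM S v q i0 : ℕ) = K + (q ⟨i0, h0⟩ : ℕ) := glue_high hKM S v q h0
  have e1 : ((univ : Finset {x // x ∈ S}).filter
      (fun k => glue hKM S v q k.1 = glue hKM S v q i0)).card = 0 := by
    rw [Finset.card_eq_zero, Finset.filter_eq_empty_iff]
    intro k _ heq
    have h1 := glue_low hKM S v q k.2
    have h2 : (glue hKM S v q k.1 : ℕ) = (glue hKM S v q i0 : ℕ) := by rw [heq]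
    have := (v ⟨k.1, k.2⟩).isLt
    omega
  rw [e1, zero_add]
  congr 1
  apply Finset.filter_congr
  intro k _
  have h1 := glue_high hKM S v q k.2
  have hq : q ⟨k.1, k.2⟩ = q k := by congr
  constructor
  · intro hh
    have : (glue hKM S v q k.1 : ℕ) = (glue hKM S v q i0 : ℕ) := by rw [hh]
    apply Fin.ext
    have : K + (q ⟨k.1, k.2⟩ : ℕ) = K + (q ⟨i0, h0⟩ : ℕ) := by rw [← h1, this, hval]
    rw [← hq]
    omega
  · intro hh
    apply Fin.ext
    rw [h1, hval, ← hq, hh]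
end GlueDef

section Fiber
variable {ι : Type} [Fintype ι] [DecidableEq ι] {n K M : ℕ}

def vOf (hKM : K + M = n) (S : Finset ι) (π : ι → Fin n)
    (hlow : univ.filter (fun i => (π i : ℕ) + 1 ≤ K) = S) : {x // x ∈ S} → Fin K :=
  fun j => ⟨(π j.1 : ℕ), by
    have h1 : j.1 ∈ univ.filter (fun i => (π i : ℕ) + 1 ≤ K) := hlow ▸ j.2
    have := (Finset.mem_filter.mp h1).2
    omega⟩

def qOf (hKM : K + M = n) (S : Finset ι) (π : ι → Fin n)
    (hlow : univ.filter (fun i => (π i : ℕ) + 1 ≤ K) = S) : {x // x ∈ Sᶜ} → Fin M :=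
  fun j => ⟨(π j.1 : ℕ) - K, by
    have h1 : j.1 ∉ univ.filter (fun i => (π i : ℕ) + 1 ≤ K) := by
      rw [hlow]; exact Finset.mem_compl.mp j.2
    have h2 : ¬ ((π j.1 : ℕ) + 1 ≤ K) := by
      intro hc
      exact h1 (Finset.mem_filter.mpr ⟨Finset.mem_univ _, hc⟩)
    have h3 := (π j.1).isLt
    omega⟩

lemma glue_vOf_qOf (hKM : K + M = n) (S : Finset ι) (π : ι → Fin n)
    (hlow : univ.filter (fun i => (π i : ℕ) + 1 ≤ K) = S) :
    glue hKM S (vOf hKM S π hlow) (qOf hKM S π hlow) = π := by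
  funext i
  apply Fin.ext
  by_cases h : i ∈ S
  · rw [glue_low hKM S _ _ h]
    rfl
  · rw [glue_high hKM S _ _ (Finset.mem_compl.mpr h)]
    show K + ((π i : ℕ) - K) = (π i : ℕ)
    have h1 : i ∉ univ.filter (fun i => (π i : ℕ) + 1 ≤ K) := by
      rw [hlow]; exact h
    have h2 : ¬ ((π i : ℕ) + 1 ≤ K) := by
      intro hc
      exact h1 (Finset.mem_filter.mpr ⟨Finset.mem_univ _, hc⟩)
    omega

lemma vOf_glue (hKM : K + M = n) (S : Finset ι) (v : {x // x ∈ S} → Fin K)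
    (q : {x // x ∈ Sᶜ} → Fin M) (hlow) :
    vOf hKM S (glue hKM S v q) hlow = v := by
  funext j
  apply Fin.ext
  show (glue hKM S v q j.1 : ℕ) = (v j : ℕ)
  rw [glue_low hKM S v q j.2]

lemma qOf_glue (hKM : K + M = n) (S : Finset ι) (v : {x // x ∈ S} → Fin K)
    (q : {x // x ∈ Sᶜ} → Fin M) (hlow) :
    qOf hKM S (glue hKM S v q) hlow = q := by
  funext j
  apply Fin.ext
  show (glue hKM S v q j.1 : ℕ) - K = (q j : ℕ)
  rw [glue_high hKM S v q j.2]
  have : q ⟨j.1, j.2⟩ = q j := by congr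
  rw [this]
  omega

lemma fiber_sum (hKM : K + M = n) (hcard : Fintype.card ι = M + 1) (S : Finset ι)
    (f : (ι → Fin n) → ℚ) :
    ∑ π ∈ (pf' ι n).filter (fun π => univ.filter (fun i => (π i : ℕ) + 1 ≤ K) = S), f π
      = ∑ v : {x // x ∈ S} → Fin K, ∑ q ∈ pf' {x // x ∈ Sᶜ} M, f (glue hKM S v q) := by
  have hsub : Fintype.card {x // x ∈ Sᶜ} = Fintype.card ι - S.card := by
    rw [Fintype.card_coe, Finset.card_compl]
  rw [← Finset.sum_product']
  refine Finset.sum_bij' (i := fun π hπ =>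
      (vOf hKM S π (Finset.mem_filter.mp hπ).2, qOf hKM S π (Finset.mem_filter.mp hπ).2))
    (j := fun vq _ => glue hKM S vq.1 vq.2) ?_ ?_ ?_ ?_ ?_
  · intro π hπ
    rw [Finset.mem_product]
    refine ⟨Finset.mem_univ _, ?_⟩
    have hlow := (Finset.mem_filter.mp hπ).2
    have hpf := (Finset.mem_filter.mp hπ).1
    rw [← glue_mem_pf'_iff hKM S _ _ hcard hsub]
    rw [glue_vOf_qOf]
    exact hpf
  · intro vq hvq
    rw [Finset.mem_product] at hvq
    rw [Finset.mem_filter]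
    constructor
    · rw [glue_mem_pf'_iff hKM S _ _ hcard hsub]
      exact hvq.2
    · exact lowset_glue hKM S vq.1 vq.2
  · intro π hπ
    exact glue_vOf_qOf hKM S π (Finset.mem_filter.mp hπ).2
  · intro vq hvq
    exact Prod.ext (vOf_glue hKM S vq.1 vq.2 (lowset_glue hKM S vq.1 vq.2)) (qOf_glue hKM S vq.1 vq.2 (lowset_glue hKM S vq.1 vq.2))
  · intro π hπ
    rw [glue_vOf_qOf]
end Fiber

section FSum
variable {ι : Type} [Fintype ι] [DecidableEq ι] {n K M : ℕ}

lemma fiber_empty (hKM : K + M = n) (hK : 1 ≤ K) (hcard : Fintype.card ι = M + 1)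
    (f : (ι → Fin n) → ℚ) :
    ∑ π ∈ (pf' ι n).filter (fun π => univ.filter (fun i => (π i : ℕ) + 1 ≤ K) = (∅ : Finset ι)),
      f π = 0 := by
  rw [Finset.filter_eq_empty_iff.mpr, Finset.sum_empty]
  intro π hπ
  have H := mem_pf'.mp hπ K (by omega)
  intro hc
  rw [hc, Finset.card_empty] at H
  omega

lemma FSum_mem (hKM : K + M = n) (hcard : Fintype.card ι = M + 1) (S : Finset ι)
    (i0 : ι) (h0 : i0 ∈ S) (x y : ℚ) :
    ∑ π ∈ (pf' ι n).filter (fun π => univ.filter (fun i => (π i : ℕ) + 1 ≤ K) = S),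
        x ^ (univ.filter (fun i => (π i : ℕ) + 1 ≤ K)).card
          * y ^ (univ.filter (fun i => π i = π i0)).card
      = (x ^ S.card * ((K:ℚ) * y * (y + (K:ℚ) - 1) ^ (S.card - 1)))
          * ∑ q ∈ pf' {z // z ∈ Sᶜ} M, (1:ℚ) := by
  rw [fiber_sum hKM hcard S]
  have step : ∀ v : {z // z ∈ S} → Fin K, ∀ q ∈ pf' {z // z ∈ Sᶜ} M,
      x ^ (univ.filter (fun i => (glue hKM S v q i : ℕ) + 1 ≤ K)).card
        * y ^ (univ.filter (fun i => glue hKM S v q i = glue hKM S v q i0)).card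
      = (x ^ S.card * y ^ ((univ : Finset {z // z ∈ S}).filter
            (fun j => v j = v ⟨i0, h0⟩)).card) * 1 := by
    intro v q _
    rw [lowset_glue hKM S v q, lel_glue_low hKM S v q h0, mul_one]
  rw [Finset.sum_congr rfl (fun v _ => Finset.sum_congr rfl (step v))]
  rw [← Finset.sum_mul_sum]
  congr 1
  rw [← Finset.mul_sum]
  congr 1
  rw [sum_y (α := {z // z ∈ S}) ⟨i0, h0⟩ K y, Fintype.card_coe]

lemma FSum_notmem (hKM : K + M = n) (hcard : Fintype.card ι = M + 1) (S : Finset ι)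
    (i0 : ι) (h0 : i0 ∉ S) (x y : ℚ) :
    ∑ π ∈ (pf' ι n).filter (fun π => univ.filter (fun i => (π i : ℕ) + 1 ≤ K) = S),
        x ^ (univ.filter (fun i => (π i : ℕ) + 1 ≤ K)).card
          * y ^ (univ.filter (fun i => π i = π i0)).card
      = ((K:ℚ) ^ S.card * x ^ S.card)
          * ∑ q ∈ pf' {z // z ∈ Sᶜ} M,
              y ^ ((univ : Finset {z // z ∈ Sᶜ}).filter
                (fun j => q j = q ⟨i0, Finset.mem_compl.mpr h0⟩)).card := by
  rw [fiber_sum hKM hcard S]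
  have step : ∀ v : {z // z ∈ S} → Fin K, ∀ q ∈ pf' {z // z ∈ Sᶜ} M,
      x ^ (univ.filter (fun i => (glue hKM S v q i : ℕ) + 1 ≤ K)).card
        * y ^ (univ.filter (fun i => glue hKM S v q i = glue hKM S v q i0)).card
      = x ^ S.card * y ^ ((univ : Finset {z // z ∈ Sᶜ}).filter
            (fun j => q j = q ⟨i0, Finset.mem_compl.mpr h0⟩)).card := by
    intro v q _
    rw [lowset_glue hKM S v q, lel_glue_high hKM S v q (Finset.mem_compl.mpr h0)]
  rw [Finset.sum_congr rfl (fun v _ => Finset.sum_congr rfl (step v))]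
  rw [← Finset.sum_mul_sum]
  congr 1
  rw [Finset.sum_const, Finset.card_univ, Fintype.card_fun, Fintype.card_coe, Fintype.card_fin,
    nsmul_eq_mul]
  push_cast
  ring
end FSum

def E (m n : ℕ) (x y : ℚ) : ℚ :=
  if m = 0 then 1
  else if m = 1 then n * x * y
  else ((n : ℚ) - m + 1) * x * y *
        ((m - 1) * (((n : ℚ) - m + 1) * x + y + m - 1) ^ (m - 2)
          + (x * y + ((n : ℚ) - m) * x + 1) * (x * y + ((n : ℚ) - m) * x + m) ^ (m - 2))

lemma E_one_y (m n : ℕ) (hm : 1 ≤ m) (y : ℚ) :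
    E m n 1 y = ((n:ℚ) - m + 1) * y * (y + (n:ℚ)) ^ (m - 1) := by
  rcases Nat.lt_or_ge m 2 with h2 | h2
  · have : m = 1 := by omega
    subst this
    simp [E]
  · have h0 : m ≠ 0 := by omega
    have h1 : m ≠ 1 := by omega
    rw [E, if_neg h0, if_neg h1]
    have e1 : ((n:ℚ) - m + 1) * 1 + y + (m:ℚ) - 1 = y + n := by ring
    have e2 : 1 * y + ((n:ℚ) - m) * 1 + (m:ℚ) = y + n := by ring
    rw [e1, e2]
    have e3 : (y + (n:ℚ)) ^ (m - 1) = (y + (n:ℚ)) ^ (m - 2) * (y + n) := by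
      rw [show m - 1 = (m - 2) + 1 by omega, pow_succ]
    rw [e3]
    ring

lemma E_one_one (m n : ℕ) (hm : 1 ≤ m) :
    E m n 1 1 = ((n:ℚ) - m + 1) * ((n:ℚ) + 1) ^ (m - 1) := by
  rw [E_one_y m n hm 1]
  rw [show (1:ℚ) + (n:ℚ) = (n:ℚ) + 1 by ring]
  ring

lemma pf'_card_zero {ι : Type} [Fintype ι] [DecidableEq ι] (h : Fintype.card ι = 0) (n : ℕ) :
    pf' ι n = univ := by
  ext π
  simp only [mem_pf', mem_univ, iff_true, h]
  intro i hi
  omega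

lemma sum_pf'_zero {ι : Type} [Fintype ι] [DecidableEq ι] (h : Fintype.card ι = 0)
    (n : ℕ) : ∑ π ∈ pf' ι n, (1:ℚ) = 1 := by
  rw [pf'_card_zero h, Finset.sum_const, Finset.card_univ, Fintype.card_fun]
  simp [h]

lemma pf'_card_one {ι : Type} [Fintype ι] [DecidableEq ι] (h : Fintype.card ι = 1)
    (n : ℕ) : pf' ι n = univ := by
  ext π
  simp only [mem_pf', mem_univ, iff_true, h]
  intro i hi
  rcases Nat.lt_or_ge i n with hlt | hge
  · omega
  · have hin : i = n := by omega
    obtain ⟨j0⟩ := Fintype.card_pos_iff.mp (by omega : 0 < Fintype.card ι)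
    have hmem : j0 ∈ univ.filter (fun k => (π k : ℕ) + 1 ≤ i) := by
      simp only [mem_filter, mem_univ, true_and, hin]
      exact (π j0).2
    have hc : 1 ≤ (univ.filter (fun k => (π k : ℕ) + 1 ≤ i)).card :=
      Finset.card_pos.mpr ⟨j0, hmem⟩
    omega

lemma final_algebra (m n : ℕ) (hm2 : 2 ≤ m) (hmn : m ≤ n) (x y : ℚ) :
    (∑ k ∈ range m, ((m-1).choose k : ℚ) *
        (if k = 0 then 0
         else ((n-m+1 : ℕ) : ℚ)^k * x^k * ((k:ℚ) * y * (y + (m:ℚ) - 1)^(m-k-1))))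
    + (∑ k ∈ range m, ((m-1).choose k : ℚ) *
        (x^(k+1) * (((n-m+1:ℕ):ℚ) * y * (y + ((n-m+1:ℕ):ℚ) - 1)^k)
          * (if k = m - 1 then 1 else ((k:ℚ)+1) * (m:ℚ)^(m-k-2))))
    = E m n x y := by
  obtain ⟨N, rfl⟩ : ∃ N, m = N + 1 := ⟨m-1, by omega⟩
  have hN1 : 1 ≤ N := by omega
  simp only [Nat.add_sub_cancel]
  have hKq : ((n-(N+1)+1 : ℕ) : ℚ) = (n:ℚ) - (N+1) + 1 := by
    push_cast [Nat.cast_sub hmn]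
    ring
  rw [hKq]
  set Kq : ℚ := (n:ℚ) - (N+1) + 1 with hKdef
  set a : ℚ := x * (y + Kq - 1) with hadef
  set c : ℚ := y + ((N:ℚ)+1) - 1 with hcdef
  -- claim 2
  have e2 : ∀ k ∈ range (N+1), (N.choose k : ℚ) *
      (if k = 0 then 0 else Kq^k * x^k * ((k:ℚ) * y * (y + ((N+1:ℕ):ℚ) - 1)^(N+1-k-1)))
      = ((N.choose k : ℚ) * (k:ℚ) * (Kq*x)^k * c^(N-k)) * y := by
    intro k hk
    by_cases hk0 : k = 0
    · subst hk0; simp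
    · rw [if_neg hk0, show N+1-k-1 = N-k by omega, mul_pow]
      push_cast
      ring
  have c2 : ∑ k ∈ range (N+1), (N.choose k : ℚ) *
      (if k = 0 then 0 else Kq^k * x^k * ((k:ℚ) * y * (y + ((N+1:ℕ):ℚ) - 1)^(N+1-k-1)))
      = ((N:ℚ) * (Kq*x) * (Kq*x + c)^(N-1)) * y := by
    rw [Finset.sum_congr rfl e2, ← Finset.sum_mul, sum_choose_mul N (Kq*x) c]
  -- claim 1
  have e1 : ∀ k ∈ range N, (N.choose k : ℚ) *
      (x^(k+1) * (Kq * y * (y + Kq - 1)^k) * (if k = N then 1 else ((k:ℚ)+1) * ((N+1:ℕ):ℚ)^(N+1-k-2)))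
      = (Kq * x * y) * ((N.choose k : ℚ) * ((k:ℚ)+1) * a^k * ((N:ℚ)+1)^(N-1-k)) := by
    intro k hk
    have hkN : k ≠ N := by have := Finset.mem_range.mp hk; omega
    rw [if_neg hkN, show N+1-k-2 = N-1-k by omega, pow_succ, hadef, mul_pow]
    push_cast
    ring
  have c1 : ∑ k ∈ range (N+1), (N.choose k : ℚ) *
      (x^(k+1) * (Kq * y * (y + Kq - 1)^k) * (if k = N then 1 else ((k:ℚ)+1) * ((N+1:ℕ):ℚ)^(N+1-k-2)))
      = (Kq * x * y) * ((a+1) * (a + ((N:ℚ)+1))^(N-1)) := by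
    rw [Finset.sum_range_succ, if_pos rfl, Finset.sum_congr rfl e1, ← Finset.mul_sum]
    have hlast : (N.choose N : ℚ) * (x^(N+1) * (Kq * y * (y + Kq - 1)^N) * 1)
        = (Kq * x * y) * a^N := by
      rw [Nat.choose_self, hadef, mul_pow, pow_succ]
      push_cast
      ring
    rw [hlast, ← mul_add]
    congr 1
    have k1 := key1 N hN1 a
    rw [← k1]
  rw [c2, c1, E, if_neg (by omega : ¬ (N+1 = 0)), if_neg (by omega : ¬ (N+1 = 1)),
    show N+1-2 = N-1 by omega]
  have hb1 : ((n:ℚ) - ↑(N+1) + 1) * x + y + ↑(N+1) - 1 = Kq * x + c := by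
    push_cast; rw [hKdef, hcdef]; ring
  have hb2 : x * y + ((n:ℚ) - ↑(N+1)) * x + ↑(N+1) = a + ((N:ℚ)+1) := by
    push_cast; rw [hadef, hKdef]; ring
  rw [hb1, hb2]
  have hc1 : ((N+1:ℕ):ℚ) - 1 = (N:ℚ) := by push_cast; ring
  push_cast
  ring

lemma sum_powerset_split {β : Type} [AddCommMonoid β] {ι : Type} [DecidableEq ι] [Fintype ι]
    (i0 : ι) (f : Finset ι → β) :
    ∑ S ∈ (univ : Finset ι).powerset, f S
      = ∑ T ∈ (univ.erase i0).powerset, f T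
        + ∑ T ∈ (univ.erase i0).powerset, f (insert i0 T) := by
  conv_lhs => rw [show (univ : Finset ι) = insert i0 (univ.erase i0) from
    (Finset.insert_erase (mem_univ i0)).symm]
  exact Finset.sum_powerset_insert (Finset.notMem_erase i0 univ) f

theorem master (m : ℕ) : ∀ (ι : Type) [Fintype ι] [DecidableEq ι], Fintype.card ι = m →
    ∀ n, m ≤ n → ∀ (i0 : ι) (x y : ℚ),
    ∑ π ∈ pf' ι n, x ^ (univ.filter (fun i => (π i : ℕ) + 1 ≤ n - m + 1)).card *
        y ^ (univ.filter (fun i => π i = π i0)).card = E m n x y := by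
  induction m using Nat.strong_induction_on with
  | _ m IH =>
  intro ι _ _ hcard n hmn i0 x y
  by_cases hm0 : m = 0
  · have : 0 < Fintype.card ι := Fintype.card_pos_iff.mpr ⟨i0⟩
    omega
  by_cases hm1 : m = 1
  · subst hm1
    haveI : Subsingleton ι := Fintype.card_le_one_iff_subsingleton.mp (by omega)
    rw [pf'_card_one hcard]
    have hsum : ∀ π : ι → Fin n, x ^ (univ.filter (fun i => (π i : ℕ) + 1 ≤ n - 1 + 1)).card *
        y ^ (univ.filter (fun i => π i = π i0)).card = x * y := by
      intro π
      have h1 : (univ.filter (fun i => (π i : ℕ) + 1 ≤ n - 1 + 1)).card = 1 := by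
        rw [Finset.filter_true_of_mem, Finset.card_univ, hcard]
        intro i _
        have h2 := (π i).isLt
        have hn1 : 1 ≤ n := hmn
        omega
      have h2 : (univ.filter (fun i => π i = π i0)).card = 1 := by
        rw [Finset.filter_true_of_mem, Finset.card_univ, hcard]
        intro i _
        rw [Subsingleton.elim i i0]
      rw [h1, h2, pow_one, pow_one]
    rw [Finset.sum_congr rfl (fun π _ => hsum π), Finset.sum_const, Finset.card_univ,
      Fintype.card_fun, hcard, pow_one, nsmul_eq_mul, E]
    norm_num
    ring
  -- main case
  have hm2 : 2 ≤ m := by omega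
  set K := n - m + 1 with hKdef
  set M := m - 1 with hMdef
  have hKM : K + M = n := by omega
  have hcard' : Fintype.card ι = M + 1 := by omega
  rw [← Finset.sum_fiberwise_of_maps_to
      (g := fun π => univ.filter (fun i => ((π i : ℕ)) + 1 ≤ K))
      (t := (univ : Finset ι).powerset)
      (fun π _ => Finset.mem_powerset.mpr (Finset.subset_univ _))]
  rw [sum_powerset_split i0]
  have hA : (univ.erase i0).card = M := by
    rw [Finset.card_erase_of_mem (mem_univ i0), Finset.card_univ, hcard]
  -- evaluation of fibers not containing i0
  have evalT : ∀ T ∈ (univ.erase i0).powerset,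
      (∑ π ∈ (pf' ι n).filter (fun π => univ.filter (fun i => ((π i : ℕ)) + 1 ≤ K) = T),
        x ^ (univ.filter (fun i => (π i : ℕ) + 1 ≤ K)).card
          * y ^ (univ.filter (fun i => π i = π i0)).card)
      = (if T.card = 0 then 0
         else (K : ℚ)^T.card * x^T.card
            * ((T.card:ℚ) * y * (y + (m:ℚ) - 1)^(m-T.card-1))) := by
    intro T hT
    have hi0T : i0 ∉ T := fun h => Finset.notMem_erase i0 univ (Finset.mem_powerset.mp hT h)
    by_cases hT0 : T = ∅
    · subst hT0
      rw [fiber_empty hKM (by omega) hcard']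
      simp
    · have ht1 : 1 ≤ T.card := Finset.card_pos.mpr (Finset.nonempty_of_ne_empty hT0)
      have htM : T.card ≤ M := by
        have := Finset.card_le_card (Finset.mem_powerset.mp hT)
        omega
      rw [FSum_notmem hKM hcard' T i0 hi0T x y]
      have hsubcard : Fintype.card {z // z ∈ Tᶜ} = m - T.card := by
        rw [Fintype.card_coe, Finset.card_compl, hcard]
      have IHq := IH (m - T.card) (by omega) {z // z ∈ Tᶜ} hsubcard M (by omega)
        ⟨i0, Finset.mem_compl.mpr hi0T⟩ 1 y
      have hconv : ∑ q ∈ pf' {z // z ∈ Tᶜ} M,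
          y ^ ((univ : Finset {z // z ∈ Tᶜ}).filter
              (fun j => q j = q ⟨i0, Finset.mem_compl.mpr hi0T⟩)).card
          = E (m - T.card) M 1 y := by
        rw [← IHq]
        exact Finset.sum_congr rfl (fun q _ => by rw [one_pow, one_mul])
      rw [hconv, E_one_y (m - T.card) M (by omega) y, if_neg (by omega)]
      have c1 : ((M:ℕ):ℚ) = (m:ℚ) - 1 := by
        rw [hMdef]; push_cast [Nat.cast_sub (by omega : 1 ≤ m)]; ring
      have c2 : ((m - T.card : ℕ):ℚ) = (m:ℚ) - (T.card:ℚ) := by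
        push_cast [Nat.cast_sub (by omega : T.card ≤ m)]; ring
      rw [c1, c2]
      have hexp : (y + ((m:ℚ) - 1)) = (y + (m:ℚ) - 1) := by ring
      rw [hexp]
      ring
  -- evaluation of fibers containing i0
  have evalIns : ∀ T ∈ (univ.erase i0).powerset,
      (∑ π ∈ (pf' ι n).filter
          (fun π => univ.filter (fun i => ((π i : ℕ)) + 1 ≤ K) = insert i0 T),
        x ^ (univ.filter (fun i => (π i : ℕ) + 1 ≤ K)).card
          * y ^ (univ.filter (fun i => π i = π i0)).card)
      = x^(T.card+1) * ((K:ℚ) * y * (y + (K:ℚ) - 1)^T.card)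
          * (if T.card = m - 1 then 1 else ((T.card:ℚ)+1) * (m:ℚ)^(m-T.card-2)) := by
    intro T hT
    have hi0T : i0 ∉ T := fun h => Finset.notMem_erase i0 univ (Finset.mem_powerset.mp hT h)
    have hScard : (insert i0 T).card = T.card + 1 := Finset.card_insert_of_notMem hi0T
    have htM : T.card ≤ M := by
      have := Finset.card_le_card (Finset.mem_powerset.mp hT)
      omega
    rw [FSum_mem hKM hcard' (insert i0 T) i0 (Finset.mem_insert_self i0 T) x y, hScard]
    simp only [Nat.add_sub_cancel]
    have hsubcard : Fintype.card {z // z ∈ (insert i0 T)ᶜ} = m - (T.card + 1) := by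
      rw [Fintype.card_coe, Finset.card_compl, hcard, hScard]
    by_cases hfull : T.card = m - 1
    · rw [if_pos hfull]
      have h0 : Fintype.card {z // z ∈ (insert i0 T)ᶜ} = 0 := by omega
      rw [sum_pf'_zero h0 M]
    · rw [if_neg hfull]
      have hm' : 1 ≤ m - (T.card + 1) := by omega
      obtain ⟨j0⟩ := Fintype.card_pos_iff.mp
        (by omega : 0 < Fintype.card {z // z ∈ (insert i0 T)ᶜ})
      have IHq := IH (m - (T.card + 1)) (by omega) {z // z ∈ (insert i0 T)ᶜ} hsubcard M
        (by omega) j0 1 1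
      have hconv : ∑ q ∈ pf' {z // z ∈ (insert i0 T)ᶜ} M, (1:ℚ)
          = E (m - (T.card + 1)) M 1 1 := by
        rw [← IHq]
        exact Finset.sum_congr rfl (fun q _ => by rw [one_pow, one_pow, one_mul])
      rw [hconv, E_one_one (m - (T.card + 1)) M hm']
      have c1 : ((M:ℕ):ℚ) = (m:ℚ) - 1 := by
        rw [hMdef]; push_cast [Nat.cast_sub (by omega : 1 ≤ m)]; ring
      have c2 : ((m - (T.card + 1) : ℕ):ℚ) = (m:ℚ) - ((T.card:ℚ) + 1) := by
        push_cast [Nat.cast_sub (by omega : T.card + 1 ≤ m)]; ring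
      have c3 : m - (T.card + 1) - 1 = m - T.card - 2 := by omega
      rw [c1, c2, c3]
      ring
  rw [Finset.sum_congr rfl evalT, Finset.sum_congr rfl evalIns]
  rw [Finset.sum_powerset_apply_card (f := fun t => (if t = 0 then 0
         else (K : ℚ)^t * x^t * ((t:ℚ) * y * (y + (m:ℚ) - 1)^(m-t-1))))]
  rw [Finset.sum_powerset_apply_card (f := fun t => x^(t+1) * ((K:ℚ) * y * (y + (K:ℚ) - 1)^t)
          * (if t = m - 1 then 1 else ((t:ℚ)+1) * (m:ℚ)^(m-t-2)))]
  rw [hA, show M + 1 = m from by omega]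
  simp only [nsmul_eq_mul]
  rw [hKdef]
  exact final_algebra m n hm2 hmn x y


/-- The finite set of parking functions `PF(m,n)`, encoded as functions
`Fin m → Fin n`, where the preferred spot of car `k` is `(π k : ℕ) + 1 ∈ {1,…,n}`. -/
def pf (m n : ℕ) : Finset (Fin m → Fin n) :=
  Finset.univ.filter (fun π =>
    ∀ i, i ≤ n → m + i ≤ (Finset.univ.filter (fun k => (π k : ℕ) + 1 ≤ i)).card + n)

theorem gf_slev_lel (m n : ℕ) (hm : 2 ≤ m) (hmn : m ≤ n) (x y : ℚ) :
    ∑ π ∈ pf m n,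
        x ^ (Finset.univ.filter (fun i => (π i : ℕ) + 1 ≤ n - m + 1)).card *
        y ^ (Finset.univ.filter (fun i => π i = π ⟨0, by omega⟩)).card =
      ((n : ℚ) - m + 1) * x * y *
        ((m - 1) * (((n : ℚ) - m + 1) * x + y + m - 1) ^ (m - 2)
          + (x * y + ((n : ℚ) - m) * x + 1) * (x * y + ((n : ℚ) - m) * x + m) ^ (m - 2)) := by
  have hpf : pf m n = pf' (Fin m) n := by
    ext π
    rw [mem_pf']
    simp [pf, Fintype.card_fin]
  have h := master m (Fin m) (Fintype.card_fin m) n hmn ⟨0, by omega⟩ x y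
  rw [hpf, h, E, if_neg (by omega : ¬ m = 0), if_neg (by omega : ¬ m = 1)]
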